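/- Let V = ℝ^ℕ carry the product topology and let V* be its topological dual space. There is no metrizable vector space topology on V* that is finer than (i.e., contains) the weak-* topology of pointwise convergence on V. -/

import Mathlib

open Filter Topology

local notation "E" => (ℕ → ℝ) →L[ℝ] ℝ

private theorem stmt11_aux [t : TopologicalSpace ((ℕ → ℝ) →L[ℝ] ℝ)]
    [IsTopologicalAddGroup ((ℕ → ℝ) →L[ℝ] ℝ)]
    [ContinuousSMul ℝ ((ℕ → ℝ) →L[ℝ] ℝ)]
    [TopologicalSpace.MetrizableSpace ((ℕ → ℝ) →L[ℝ] ℝ)]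
    (hle : t ≤ TopologicalSpace.induced
      (fun (f : (ℕ → ℝ) →L[ℝ] ℝ) (x : ℕ → ℝ) => f x) Pi.topologicalSpace) : False := by
  -- countable antitone basis of neighborhoods of 0
  obtain ⟨U, hU⟩ := (𝓝 (0 : E)).exists_antitone_basis
  -- coordinate functionals
  set P : ℕ → E := fun n => ContinuousLinearMap.proj (R := ℝ) (φ := fun _ : ℕ => ℝ) n with hP
  have hc : ∀ n, ∃ d : ℝ, d ≠ 0 ∧ d • P n ∈ U n := by
    intro n
    have ht : Filter.Tendsto (fun d : ℝ => d • P n) (𝓝[≠] (0 : ℝ)) (𝓝 (0 : E)) := by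
      have h1 : Filter.Tendsto (fun d : ℝ => d • P n) (𝓝 0) (𝓝 ((0 : ℝ) • P n)) :=
        Filter.tendsto_id.smul_const (P n)
      rw [zero_smul] at h1
      exact h1.mono_left nhdsWithin_le_nhds
    have hmem : ∀ᶠ d in 𝓝[≠] (0 : ℝ), d • P n ∈ U n :=
      ht.eventually_mem (hU.1.mem_of_mem trivial)
    obtain ⟨d, hdU, hd0⟩ := (hmem.and self_mem_nhdsWithin).exists
    exact ⟨d, hd0, hdU⟩
  choose c hc0 hcU using hc
  set f : ℕ → E := fun n => c n • P n with hf
  have htend : Filter.Tendsto f Filter.atTop (𝓝 (0 : E)) := hU.tendsto hcU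
  -- pass to the weak-* topology
  have htend' : Filter.Tendsto f Filter.atTop
      (@nhds E (TopologicalSpace.induced
        (fun (g : E) (x : ℕ → ℝ) => g x) Pi.topologicalSpace) 0) :=
    htend.mono_right (nhds_mono hle)
  rw [nhds_induced] at htend'
  have htend'' : Filter.Tendsto (fun n => (f n : E).toFun) Filter.atTop
      (𝓝 (fun x : ℕ → ℝ => (0 : E) x)) := by
    rw [Filter.tendsto_comap_iff] at htend'
    exact htend'
  set x : ℕ → ℝ := fun k => (c k)⁻¹ with hx
  have heval : Filter.Tendsto (fun n => f n x) Filter.atTop (𝓝 (0 : ℝ)) := by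
    have := ((continuous_apply x).tendsto _).comp htend''
    simpa [Function.comp_def] using this
  have hone : ∀ n, f n x = 1 := by
    intro n
    simp only [hf, hx, hP, ContinuousLinearMap.smul_apply, ContinuousLinearMap.proj_apply,
      smul_eq_mul]
    exact mul_inv_cancel₀ (hc0 n)
  rw [show (fun n => f n x) = fun _ => (1 : ℝ) from funext hone] at heval
  exact one_ne_zero (tendsto_nhds_unique tendsto_const_nhds heval)

/-- Let `V = ℝ^ℕ` with the product topology and `V*` its topological dual.  There is no
metrizable vector space topology on `V*` that is finer than (i.e. contains) the weak-*
topology of pointwise convergence.  (In Mathlib's order on topologies, `t ≤ s` means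
`t` is finer than `s`; the weak-* topology is the topology induced by the inclusion of
`V*` into `V → ℝ` with the product topology.) -/
theorem stmt11 :
    ¬ ∃ t : TopologicalSpace ((ℕ → ℝ) →L[ℝ] ℝ),
      @IsTopologicalAddGroup ((ℕ → ℝ) →L[ℝ] ℝ) t _ ∧
      @ContinuousSMul ℝ ((ℕ → ℝ) →L[ℝ] ℝ) _ _ t ∧
      @TopologicalSpace.MetrizableSpace ((ℕ → ℝ) →L[ℝ] ℝ) t ∧
      t ≤ TopologicalSpace.induced
        (fun (f : (ℕ → ℝ) →L[ℝ] ℝ) (x : ℕ → ℝ) => f x) Pi.topologicalSpace := by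
  rintro ⟨t, htA, htS, htM, hle⟩
  exact @stmt11_aux t htA htS htM hle
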